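/- For W ≠ 0 and (V+1)² − 4UW = N² with N a positive integer and roots w₀ ≠ w₁ of Ww² + (V+1)w + U with w₀ − w₁ = N/W, the map u(x,y) = [(y+1)^N(y−w₁x) − (y−w₀x)] / [(y+1)^N(y−w₁x)w₀ − (y−w₀x)w₁] · y/(y+1), v(x,y) = y/(y+1), defines a projective flow whose vector field is (Ux² + Vxy + Wy², −y²). -/

import Mathlib

open Filter

/-- First coordinate of the level-`N` univariate flow with parameters `w₀, w₁`. -/
noncomputable def uW (N : ℕ) (w₀ w₁ : ℝ) (p : ℝ × ℝ) : ℝ :=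
  (((p.2 + 1) ^ N * (p.2 - w₁ * p.1) - (p.2 - w₀ * p.1)) /
      ((p.2 + 1) ^ N * (p.2 - w₁ * p.1) * w₀ - (p.2 - w₀ * p.1) * w₁)) *
    (p.2 / (p.2 + 1))

/-- The level-`N` univariate flow with parameters `w₀, w₁`. -/
noncomputable def phiW (N : ℕ) (w₀ w₁ : ℝ) (p : ℝ × ℝ) : ℝ × ℝ :=
  (uW N w₀ w₁ p, p.2 / (p.2 + 1))

/-- The denominator appearing in `uW`. -/
noncomputable def denW (N : ℕ) (w₀ w₁ : ℝ) (p : ℝ × ℝ) : ℝ :=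
  (p.2 + 1) ^ N * (p.2 - w₁ * p.1) * w₀ - (p.2 - w₀ * p.1) * w₁

lemma aux1 (U V W : ℝ) (N : ℕ) (w₀ w₁ x y : ℝ) (hy : y ≠ 0)
    (hw : w₀ - w₁ ≠ 0)
    (hU : U = W * (w₀ * w₁)) (hV : V = -(W * (w₀ + w₁)) - 1)
    (hNW : (N : ℝ) = W * (w₀ - w₁)) :
    Tendsto (fun z : ℝ => z⁻¹ • (z⁻¹ • phiW N w₀ w₁ (z • (x, y)) - (x, y)))
      (nhdsWithin 0 {0}ᶜ)
      (nhds (U * x ^ 2 + V * x * y + W * y ^ 2, -y ^ 2)) := by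
  set S : ℝ → ℝ := fun z => ∑ i ∈ Finset.range N, (z * y + 1) ^ i with hSdef
  set Df : ℝ → ℝ := fun z => (z * y + 1) ^ N * (y - w₁ * x) * w₀ - (y - w₀ * x) * w₁
    with hDdef
  set f : ℝ → ℝ := fun z =>
    y * ((y - w₁ * x) * (y - w₀ * x) * S z - x * Df z) with hfdef
  set g : ℝ → ℝ := fun z => Df z * (z * y + 1) with hgdef
  have hScont : Continuous S := continuous_finset_sum _ (fun i _ => by fun_prop)
  have hDcont : Continuous Df := by rw [hDdef]; fun_prop
  have hfcont : Continuous f := by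
    rw [hfdef]
    exact continuous_const.mul
      (((continuous_const.mul hScont)).sub (continuous_const.mul hDcont))
  have hgcont : Continuous g := by
    rw [hgdef]; exact hDcont.mul (by fun_prop)
  have hg0 : g 0 ≠ 0 := by
    rw [hgdef, hDdef]
    simp only
    norm_num
    rw [show (y - w₁ * x) * w₀ - (y - w₀ * x) * w₁ = (w₀ - w₁) * y from by ring]
    exact mul_ne_zero hw hy
  have t1 : Tendsto (fun z => f z / g z) (nhds 0)
      (nhds (U * x ^ 2 + V * x * y + W * y ^ 2)) := by
    have h : Tendsto (fun z => f z / g z) (nhds 0) (nhds (f 0 / g 0)) :=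
      (hfcont.tendsto 0).div (hgcont.tendsto 0) hg0
    convert h using 2
    rw [eq_div_iff hg0, hfdef, hgdef, hDdef, hSdef]
    simp only
    norm_num
    rw [hU, hV, hNW]
    ring
  have t2 : Tendsto (fun z : ℝ => -y ^ 2 / (z * y + 1)) (nhds 0) (nhds (-y ^ 2)) := by
    have h : Tendsto (fun z : ℝ => z * y + 1) (nhds 0) (nhds 1) := by
      have := (by fun_prop : Continuous fun z : ℝ => z * y + 1).tendsto 0
      simpa using this
    simpa using (show Tendsto (fun z : ℝ => -y ^ 2 / (z * y + 1)) (nhds 0) (nhds (-y ^ 2 / 1))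
      from tendsto_const_nhds.div h one_ne_zero)
  have hG : Tendsto (fun z : ℝ => (f z / g z, -y ^ 2 / (z * y + 1)))
      (nhdsWithin (0:ℝ) {0}ᶜ)
      (nhds (U * x ^ 2 + V * x * y + W * y ^ 2, -y ^ 2)) :=
    (t1.prodMk_nhds t2).mono_left nhdsWithin_le_nhds
  apply hG.congr'
  have hne : ∀ᶠ z in nhdsWithin (0:ℝ) {0}ᶜ, g z ≠ 0 :=
    eventually_nhdsWithin_of_eventually_nhds ((hgcont.continuousAt).eventually_ne hg0)
  filter_upwards [hne, self_mem_nhdsWithin] with z hgz hz0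
  have hz : z ≠ 0 := hz0
  rw [hgdef] at hgz
  simp only at hgz
  have hD : Df z ≠ 0 := fun h => hgz (by rw [h]; ring)
  have hzy1 : z * y + 1 ≠ 0 := fun h => hgz (by rw [h]; ring)
  have hpow : (z * y + 1) ^ N = S z * (z * y) + 1 := by
    have h := geom_sum_mul (z * y + 1) N
    rw [hSdef]
    simp only
    linear_combination -h
  have hu1 : uW N w₀ w₁ (z * x, z * y) =
      (((z * y + 1) ^ N * (y - w₁ * x) - (y - w₀ * x)) / Df z) * (z * y / (z * y + 1)) := by
    simp only [uW, hDdef]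
    rw [show (z * y + 1) ^ N * (z * y - w₁ * (z * x)) - (z * y - w₀ * (z * x))
          = z * ((z * y + 1) ^ N * (y - w₁ * x) - (y - w₀ * x)) from by ring,
        show (z * y + 1) ^ N * (z * y - w₁ * (z * x)) * w₀ - (z * y - w₀ * (z * x)) * w₁
          = z * ((z * y + 1) ^ N * (y - w₁ * x) * w₀ - (y - w₀ * x) * w₁) from by ring,
        mul_div_mul_left _ _ hz]
  have hsm : z • ((x : ℝ), (y : ℝ)) = (z * x, z * y) := by
    simp [Prod.smul_mk, smul_eq_mul]
  refine Prod.ext ?_ ?_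
  · show f z / g z = z⁻¹ * (z⁻¹ * uW N w₀ w₁ (z • (x, y)) - x)
    rw [hsm, hu1, hfdef, hgdef]
    simp only
    rw [hDdef] at hD ⊢
    simp only at hD ⊢
    rw [hpow] at hD ⊢
    generalize hDD : (S z * (z * y) + 1) * (y - w₁ * x) * w₀ - (y - w₀ * x) * w₁ = Dv at hD ⊢
    have hyz : y * z + 1 ≠ 0 := by rwa [mul_comm]
    field_simp
    subst hDD
    ring
  · show -y ^ 2 / (z * y + 1)
        = z⁻¹ * (z⁻¹ * ((z • ((x:ℝ), (y:ℝ))).2 / ((z • ((x:ℝ), (y:ℝ))).2 + 1)) - y)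
    rw [hsm]
    simp only
    have hyz : y * z + 1 ≠ 0 := by rwa [mul_comm]
    field_simp
    ring

lemma aux2 (N : ℕ) (w₀ w₁ x y z : ℝ) (hz : z ≠ 0) (hy1 : y + 1 ≠ 0)
    (hzy1 : z * y + 1 ≠ 0)
    (hK : (y + 1) ^ N * (y - w₁ * x) * w₀ - (y - w₀ * x) * w₁ ≠ 0)
    (hD : (z * y + 1) ^ N * (y - w₁ * x) * w₀ - (y - w₀ * x) * w₁ ≠ 0)
    (hq7 : denW N w₀ w₁ (((1 - z) / z) • phiW N w₀ w₁ (z • (x, y))) ≠ 0) :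
    (1 - z) • phiW N w₀ w₁ (x, y)
      = phiW N w₀ w₁ (((1 - z) / z) • phiW N w₀ w₁ (z • (x, y))) := by
  have hu1 : uW N w₀ w₁ (z * x, z * y) =
      (((z * y + 1) ^ N * (y - w₁ * x) - (y - w₀ * x)) /
        ((z * y + 1) ^ N * (y - w₁ * x) * w₀ - (y - w₀ * x) * w₁)) *
        (z * y / (z * y + 1)) := by
    simp only [uW]
    rw [show (z * y + 1) ^ N * (z * y - w₁ * (z * x)) - (z * y - w₀ * (z * x))
          = z * ((z * y + 1) ^ N * (y - w₁ * x) - (y - w₀ * x)) from by ring,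
        show (z * y + 1) ^ N * (z * y - w₁ * (z * x)) * w₀ - (z * y - w₀ * (z * x)) * w₁
          = z * ((z * y + 1) ^ N * (y - w₁ * x) * w₀ - (y - w₀ * x) * w₁) from by ring,
        mul_div_mul_left _ _ hz]
  set q := ((1 - z) / z) • phiW N w₀ w₁ (z • (x, y)) with hq
  have hq2 : q.2 = (1 - z) * y / (z * y + 1) := by
    rw [hq]
    simp only [phiW, Prod.smul_mk, smul_eq_mul, Prod.snd]
    field_simp
  have hq1e : q.1 = (1 - z) * y * ((z * y + 1) ^ N * (y - w₁ * x) - (y - w₀ * x)) /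
      ((z * y + 1) * ((z * y + 1) ^ N * (y - w₁ * x) * w₀ - (y - w₀ * x) * w₁)) := by
    rw [hq]
    simp only [phiW, Prod.smul_mk, smul_eq_mul, Prod.fst]
    rw [hu1]
    field_simp
  have hq21 : q.2 + 1 = (y + 1) / (z * y + 1) := by
    rw [hq2]; field_simp; ring
  have hq2N : (q.2 + 1) ^ N = (y + 1) ^ N / (z * y + 1) ^ N := by
    rw [hq21, div_pow]
  set c : ℝ := (1 - z) * y * (w₀ - w₁) /
      ((z * y + 1) * ((z * y + 1) ^ N * (y - w₁ * x) * w₀ - (y - w₀ * x) * w₁)) with hc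
  have hBne : (z * y + 1) ^ N ≠ 0 := pow_ne_zero _ hzy1
  have h0 : q.2 - w₀ * q.1 = c * (y - w₀ * x) := by
    rw [hq2, hq1e, hc, ← div_div, ← div_div]; linear_combination (-((1 - z) * y / (z * y + 1))) * div_self hD
  have h1 : q.2 - w₁ * q.1 = c * ((z * y + 1) ^ N * (y - w₁ * x)) := by
    rw [hq2, hq1e, hc, ← div_div, ← div_div]; linear_combination (-((1 - z) * y / (z * y + 1))) * div_self hD
  have hnum : (q.2 + 1) ^ N * (q.2 - w₁ * q.1) - (q.2 - w₀ * q.1)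
      = c * ((y + 1) ^ N * (y - w₁ * x) - (y - w₀ * x)) := by
    rw [hq2N, h1, h0]; linear_combination (c * (y + 1) ^ N * (y - w₁ * x)) * div_self hBne
  have hden : (q.2 + 1) ^ N * (q.2 - w₁ * q.1) * w₀ - (q.2 - w₀ * q.1) * w₁
      = c * ((y + 1) ^ N * (y - w₁ * x) * w₀ - (y - w₀ * x) * w₁) := by
    rw [hq2N, h1, h0]; linear_combination (c * (y + 1) ^ N * (y - w₁ * x) * w₀) * div_self hBne
  have hcne : c ≠ 0 := by
    simp only [denW] at hq7
    rw [hden] at hq7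
    exact (mul_ne_zero_iff.mp hq7).1
  have hv : q.2 / (q.2 + 1) = (1 - z) * (y / (y + 1)) := by
    rw [hq21, hq2]; field_simp
  refine Prod.ext ?_ ?_
  · show (1 - z) * uW N w₀ w₁ (x, y) = uW N w₀ w₁ q
    simp only [uW, Prod.fst, Prod.snd]
    rw [hnum, hden, hv, mul_div_mul_left _ _ hcne]
    ring
  · show (1 - z) * ((x, y).2 / ((x, y).2 + 1)) = q.2 / (q.2 + 1)
    rw [hv]

/-- For `W ≠ 0`, discriminant `(V+1)² − 4UW = N²` and roots `w₀, w₁` of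
`Ww² + (V+1)w + U` with `w₀ − w₁ = N/W`, the map
`(x,y) ↦ (uW(x,y), y/(y+1))` is a projective flow with vector field
`(Ux² + Vxy + Wy², −y²)`. -/
theorem univariate_flow_of_quadratic_field
    (U V W : ℝ) (hW : W ≠ 0) (N : ℕ) (hN : 0 < N)
    (hdisc : (V + 1) ^ 2 - 4 * U * W = (N : ℝ) ^ 2)
    (w₀ w₁ : ℝ)
    (hr0 : W * w₀ ^ 2 + (V + 1) * w₀ + U = 0)
    (hr1 : W * w₁ ^ 2 + (V + 1) * w₁ + U = 0)
    (hwd : w₀ - w₁ = (N : ℝ) / W) :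
    (∀ p : ℝ × ℝ, p.2 ≠ 0 →
      Tendsto (fun z : ℝ => z⁻¹ • (z⁻¹ • phiW N w₀ w₁ (z • p) - p))
        (nhdsWithin 0 {0}ᶜ)
        (nhds (U * p.1 ^ 2 + V * p.1 * p.2 + W * p.2 ^ 2, -p.2 ^ 2))) ∧
    (∀ (p : ℝ × ℝ) (z : ℝ), z ≠ 0 →
      p.2 + 1 ≠ 0 → denW N w₀ w₁ p ≠ 0 →
      (z • p).2 + 1 ≠ 0 → denW N w₀ w₁ (z • p) ≠ 0 →
      (((1 - z) / z) • phiW N w₀ w₁ (z • p)).2 + 1 ≠ 0 →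
      denW N w₀ w₁ (((1 - z) / z) • phiW N w₀ w₁ (z • p)) ≠ 0 →
      (1 - z) • phiW N w₀ w₁ p
        = phiW N w₀ w₁ (((1 - z) / z) • phiW N w₀ w₁ (z • p))) := by
  have hwne : w₀ - w₁ ≠ 0 := by
    rw [hwd]
    exact div_ne_zero (Nat.cast_ne_zero.mpr hN.ne') hW
  have hNW : (N : ℝ) = W * (w₀ - w₁) := by
    have h := (eq_div_iff hW).mp hwd
    linarith
  have hsum : W * (w₀ + w₁) + (V + 1) = 0 := by
    have h : (w₀ - w₁) * (W * (w₀ + w₁) + (V + 1)) = 0 := by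
      linear_combination hr0 - hr1
    rcases mul_eq_zero.mp h with h' | h'
    · exact absurd h' hwne
    · exact h'
  have hV : V = -(W * (w₀ + w₁)) - 1 := by linarith
  have hU : U = W * (w₀ * w₁) := by linear_combination hr0 - w₀ * hsum
  constructor
  · rintro ⟨x, y⟩ hy
    exact aux1 U V W N w₀ w₁ x y hy hwne hU hV hNW
  · rintro ⟨x, y⟩ z hz hy1 hKp hzy1 hDzp hq6 hq7
    simp only [Prod.smul_mk, smul_eq_mul, Prod.snd] at hzy1
    simp only [denW, Prod.snd, Prod.fst] at hKp
    simp only [denW, Prod.smul_mk, smul_eq_mul, Prod.snd, Prod.fst] at hDzp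
    have hD : (z * y + 1) ^ N * (y - w₁ * x) * w₀ - (y - w₀ * x) * w₁ ≠ 0 := by
      intro h
      exact hDzp (by linear_combination z * h)
    exact aux2 N w₀ w₁ x y z hz hy1 hzy1 hKp hD hq7
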